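/- arXiv:1702.04705 — 2 statements merged into one kernel-verified Lean document; each statement's English description precedes it below -/
import Mathlib

section
/- Fix μ, x₀ ∈ ℂ. Let V ⊆ ℂ × ℂ be open such that for every (x,t) ∈ V one has x ≠ 0, x ≠ 1 and x ≠ t. Let Φ : ℂ × ℂ → Matrix (Fin 2) (Fin 2) ℂ be twice continuously ℂ-differentiable on V with Φ(x,t) invertible for all (x,t) ∈ V, satisfying ∂Φ/∂x(x,t) = ![![0, 1],![−μ/(x·(x−1)·(x−t)), 0]] · Φ(x,t) on V and Φ(x₀,t) equal to the identity matrix for every t with (x₀,t) ∈ V. Fix t ∈ ℂ and let γ : [0,1] → ℂ be continuously differentiable with γ(0) = x₀ and (γ(r), t) ∈ V for all r ∈ [0,1]. Then ∂Φ/∂t(γ(1),t) = −μ · Φ(γ(1),t) · ∫₀¹ Λ(γ(r)) · γ'(r) / (γ(r)·(γ(r)−1)·(γ(r)−t)²) dr, where Λ(y) = Φ(y,t)⁻¹ · σ₋ · Φ(y,t). -/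
open Matrix Set Filter Topology


/-- Entrywise complex partial derivative with respect to the first variable of a
matrix-valued function of two complex variables. -/
noncomputable def pdx (F : ℂ × ℂ → Matrix (Fin 2) (Fin 2) ℂ) (p : ℂ × ℂ) :
    Matrix (Fin 2) (Fin 2) ℂ :=
  Matrix.of fun i j => deriv (fun z => F (z, p.2) i j) p.1

/-- Entrywise complex partial derivative with respect to the second variable of a
matrix-valued function of two complex variables. -/
noncomputable def pds (F : ℂ × ℂ → Matrix (Fin 2) (Fin 2) ℂ) (p : ℂ × ℂ) :
    Matrix (Fin 2) (Fin 2) ℂ :=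
  Matrix.of fun i j => deriv (fun z => F (p.1, z) i j) p.2

/-- The matrix σ₋ = ![![0,0],![1,0]]. -/
def sigmaMinus : Matrix (Fin 2) (Fin 2) ℂ := !![0, 0; 1, 0]

noncomputable def AA (μ : ℂ) (q : ℂ × ℂ) : Matrix (Fin 2) (Fin 2) ℂ :=
  !![0, 1; -μ / (q.1 * (q.1 - 1) * (q.1 - q.2)), 0]

noncomputable def BB (μ : ℂ) (q : ℂ × ℂ) : Matrix (Fin 2) (Fin 2) ℂ :=
  !![0, 0; -μ / (q.1 * (q.1 - 1) * (q.1 - q.2) ^ 2), 0]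

lemma hasDerivAt_slice_fst {E : Type*} [NormedAddCommGroup E] [NormedSpace ℂ E]
    {F : ℂ × ℂ → E} {q : ℂ × ℂ} (hF : DifferentiableAt ℂ F q) :
    HasDerivAt (fun x => F (x, q.2)) (fderiv ℂ F q (1, 0)) q.1 := by
  have h1 : HasDerivAt (fun x : ℂ => (x, q.2)) ((1 : ℂ), (0 : ℂ)) q.1 :=
    (hasDerivAt_id q.1).prodMk (hasDerivAt_const q.1 q.2)
  have := hF.hasFDerivAt.comp_hasDerivAt q.1 h1
  simpa [Function.comp_def] using this

lemma hasDerivAt_slice_snd {E : Type*} [NormedAddCommGroup E] [NormedSpace ℂ E]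
    {F : ℂ × ℂ → E} {q : ℂ × ℂ} (hF : DifferentiableAt ℂ F q) :
    HasDerivAt (fun s => F (q.1, s)) (fderiv ℂ F q (0, 1)) q.2 := by
  have h1 : HasDerivAt (fun s : ℂ => (q.1, s)) ((0 : ℂ), (1 : ℂ)) q.2 :=
    (hasDerivAt_const q.2 q.1).prodMk (hasDerivAt_id q.2)
  have := hF.hasFDerivAt.comp_hasDerivAt q.2 h1
  simpa [Function.comp_def] using this

lemma comp_path {f : ℂ → ℂ} {d : ℂ} {γ : ℝ → ℂ} {g' : ℂ} {r : ℝ}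
    (hf : HasDerivAt f d (γ r)) (hγ : HasDerivAt γ g' r) :
    HasDerivAt (fun s => f (γ s)) (d * g') r := by
  have := (hf.hasFDerivAt.restrictScalars ℝ).comp_hasDerivAt r hγ
  simpa [mul_comm, Function.comp_def] using this
lemma mixed_partial {F : ℂ × ℂ → ℂ} {U : Set (ℂ × ℂ)} (hU : IsOpen U)
    (hF : ContDiffOn ℂ 2 F U) {q : ℂ × ℂ} (hq : q ∈ U) :
    HasDerivAt (fun x => deriv (fun s => F (x, s)) q.2)
      (deriv (fun s => deriv (fun x => F (x, s)) q.1) q.2) q.1 := by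
  have hdiffU : ∀ p ∈ U, DifferentiableAt ℂ F p := fun p hp =>
    ((hF.contDiffAt (hU.mem_nhds hp)).differentiableAt two_ne_zero)
  have hF2 : ContDiffAt ℂ 2 F q := hF.contDiffAt (hU.mem_nhds hq)
  have hf'd : DifferentiableAt ℂ (fderiv ℂ F) q :=
    (hF2.fderiv_right (le_refl 2)).differentiableAt one_ne_zero
  have hmem1 : ∀ᶠ x in 𝓝 q.1, (x, q.2) ∈ U := by
    have : ContinuousAt (fun x : ℂ => (x, q.2)) q.1 := continuousAt_id.prodMk continuousAt_const
    exact this.preimage_mem_nhds (hU.mem_nhds hq)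
  have hmem2 : ∀ᶠ s in 𝓝 q.2, (q.1, s) ∈ U := by
    have : ContinuousAt (fun s : ℂ => (q.1, s)) q.2 := continuousAt_const.prodMk continuousAt_id
    exact this.preimage_mem_nhds (hU.mem_nhds hq)
  have hR : deriv (fun s => deriv (fun x => F (x, s)) q.1) q.2
      = fderiv ℂ (fderiv ℂ F) q (0, 1) (1, 0) := by
    have hev : (fun s => deriv (fun x => F (x, s)) q.1)
        =ᶠ[𝓝 q.2] fun s => fderiv ℂ F (q.1, s) (1, 0) := by
      filter_upwards [hmem2] with s hs
      exact (hasDerivAt_slice_fst (q := (q.1, s)) (hdiffU _ hs)).deriv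
    rw [hev.deriv_eq]
    have h1 : HasDerivAt (fun s => fderiv ℂ F (q.1, s))
        (fderiv ℂ (fderiv ℂ F) q (0, 1)) q.2 := hasDerivAt_slice_snd hf'd
    have := h1.clm_apply (hasDerivAt_const q.2 (((1 : ℂ), (0 : ℂ)) : ℂ × ℂ))
    simpa using this.deriv
  rw [hR, (hF2.isSymmSndFDerivAt (by simp)).eq (0, 1) (1, 0)]
  have hev2 : (fun x => fderiv ℂ F (x, q.2) (0, 1))
      =ᶠ[𝓝 q.1] fun x => deriv (fun s => F (x, s)) q.2 := by
    filter_upwards [hmem1] with x hx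
    exact (hasDerivAt_slice_snd (q := (x, q.2)) (hdiffU _ hx)).deriv.symm
  have h2 : HasDerivAt (fun x => fderiv ℂ F (x, q.2))
      (fderiv ℂ (fderiv ℂ F) q (1, 0)) q.1 := hasDerivAt_slice_fst hf'd
  have h3 := h2.clm_apply (hasDerivAt_const q.1 (((0 : ℂ), (1 : ℂ)) : ℂ × ℂ))
  simp only [map_zero, smul_zero, add_zero] at h3
  exact h3.congr_of_eventuallyEq hev2.symm
section Main
variable (μ : ℂ) {V : Set (ℂ × ℂ)} (hV : IsOpen V)
  (hVreg : ∀ p ∈ V, p.1 ≠ 0 ∧ p.1 ≠ 1 ∧ p.1 ≠ p.2)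
  (Φ : ℂ × ℂ → Matrix (Fin 2) (Fin 2) ℂ)
  (hΦ : ∀ i j, ContDiffOn ℂ 2 (fun p => Φ p i j) V)
  (heq : ∀ p ∈ V, pdx Φ p = !![0, 1; -μ / (p.1 * (p.1 - 1) * (p.1 - p.2)), 0] * Φ p)

include hV hΦ in
lemma hdiff_entry : ∀ (i j : Fin 2), ∀ p ∈ V, DifferentiableAt ℂ (fun q => Φ q i j) p :=
  fun i j p hp => ((hΦ i j).contDiffAt (hV.mem_nhds hp)).differentiableAt two_ne_zero

include hV hΦ in
lemma phi_x_hasDerivAt (hq' : ∀ p ∈ V, pdx Φ p = AA μ p * Φ p) {q : ℂ × ℂ} (hq : q ∈ V) :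
    ∀ i j, HasDerivAt (fun x => Φ (x, q.2) i j) ((AA μ q * Φ q) i j) q.1 := by
  intro i j
  have h := hasDerivAt_slice_fst (hdiff_entry hV Φ hΦ i j q hq)
  have hval : fderiv ℂ (fun q => Φ q i j) q (1, 0) = (AA μ q * Φ q) i j := by
    rw [← h.deriv]
    have : deriv (fun x => Φ (x, q.2) i j) q.1 = pdx Φ q i j := rfl
    rw [this, hq' q hq]
  rwa [hval] at h

include hV hΦ in
lemma phi_s_hasDerivAt {q : ℂ × ℂ} (hq : q ∈ V) :
    ∀ i j, HasDerivAt (fun s => Φ (q.1, s) i j) (pds Φ q i j) q.2 := by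
  intro i j
  have h := hasDerivAt_slice_snd (hdiff_entry hV Φ hΦ i j q hq)
  have hval : fderiv ℂ (fun q => Φ q i j) q (0, 1) = pds Φ q i j := by
    rw [← h.deriv]; rfl
  rwa [hval] at h


include hV hVreg hΦ in
lemma pds_entry_hasDerivAt (hq' : ∀ p ∈ V, pdx Φ p = AA μ p * Φ p) {q : ℂ × ℂ} (hq : q ∈ V) :
    ∀ i j, HasDerivAt (fun x => pds Φ (x, q.2) i j)
      ((BB μ q * Φ q + AA μ q * pds Φ q) i j) q.1 := by
  intro i j
  have key := mixed_partial hV (hΦ i j) hq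
  have hmem2 : ∀ᶠ s in 𝓝 q.2, (q.1, s) ∈ V := by
    have : ContinuousAt (fun s : ℂ => (q.1, s)) q.2 := continuousAt_const.prodMk continuousAt_id
    exact this.preimage_mem_nhds (hV.mem_nhds hq)
  obtain ⟨hx0, hx1, hxt⟩ := hVreg q hq
  have hx1' : q.1 - 1 ≠ 0 := sub_ne_zero.mpr hx1
  have hxt' : q.1 - q.2 ≠ 0 := sub_ne_zero.mpr hxt
  have hΦs := phi_s_hasDerivAt hV Φ hΦ hq
  have hval : deriv (fun s => deriv (fun x => Φ (x, s) i j) q.1) q.2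
      = (BB μ q * Φ q + AA μ q * pds Φ q) i j := by
    have hev : (fun s => deriv (fun x => Φ (x, s) i j) q.1)
        =ᶠ[𝓝 q.2] fun s => (AA μ (q.1, s) * Φ (q.1, s)) i j := by
      filter_upwards [hmem2] with s hs
      have h1 : deriv (fun x => Φ (x, s) i j) q.1 = pdx Φ (q.1, s) i j := rfl
      rw [h1, hq' _ hs]
    rw [hev.deriv_eq]
    fin_cases i
    · simp only [Fin.zero_eta, Fin.isValue]
      have hfun : (fun s => (AA μ (q.1, s) * Φ (q.1, s)) 0 j)
          = fun s => Φ (q.1, s) 1 j := by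
        funext s; simp [AA, Matrix.mul_apply, Fin.sum_univ_two]
      rw [hfun, (hΦs 1 j).deriv]
      simp [AA, BB, Matrix.mul_apply, Matrix.vecMul, dotProduct, Fin.sum_univ_two]
    · simp only [Fin.mk_one, Fin.isValue]
      have hc : HasDerivAt (fun s => -μ / (q.1 * (q.1 - 1) * (q.1 - s)))
          (-μ / (q.1 * (q.1 - 1) * (q.1 - q.2) ^ 2)) q.2 := by
        have h1 : HasDerivAt (fun s : ℂ => q.1 - s) (-1) q.2 := by
          simpa using (hasDerivAt_id q.2).const_sub q.1
        have hden : HasDerivAt (fun s => q.1 * (q.1 - 1) * (q.1 - s))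
            (-(q.1 * (q.1 - 1))) q.2 := by
          simpa [mul_comm] using h1.const_mul (q.1 * (q.1 - 1))
        have h2 := (hasDerivAt_const q.2 (-μ)).fun_div hden
          (mul_ne_zero (mul_ne_zero hx0 hx1') hxt')
        convert h2 using 1
        · rfl
        · rfl
        field_simp
        ring
      have hfun : (fun s => (AA μ (q.1, s) * Φ (q.1, s)) 1 j)
          = fun s => (-μ / (q.1 * (q.1 - 1) * (q.1 - s))) * Φ (q.1, s) 0 j := by
        funext s; simp [AA, Matrix.mul_apply, Fin.sum_univ_two]
      rw [hfun, (hc.fun_mul (hΦs 0 j)).deriv]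
      simp [AA, BB, Matrix.mul_apply, Matrix.vecMul, dotProduct, Fin.sum_univ_two]
  exact hval ▸ key
lemma inv2_hasDerivAt {P : ℝ → Matrix (Fin 2) (Fin 2) ℂ} {P' : Matrix (Fin 2) (Fin 2) ℂ} {r : ℝ}
    (hP : ∀ i j, HasDerivAt (fun s => P s i j) (P' i j) r) (h0 : (P r).det ≠ 0) :
    ∀ i j, HasDerivAt (fun s => (P s)⁻¹ i j)
      ((-((P r)⁻¹ * P' * (P r)⁻¹)) i j) r := by
  have hdet : (fun s => (P s).det) = fun s => P s 0 0 * P s 1 1 - P s 0 1 * P s 1 0 :=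
    funext fun s => Matrix.det_fin_two _
  set δ : ℂ := P' 0 0 * P r 1 1 + P r 0 0 * P' 1 1 - (P' 0 1 * P r 1 0 + P r 0 1 * P' 1 0) with hδ
  have hΔ : HasDerivAt (fun s => (P s).det) δ r := by
    rw [hdet, hδ]
    exact ((hP 0 0).mul (hP 1 1)).sub ((hP 0 1).mul (hP 1 0))
  have hI : HasDerivAt (fun s => ((P s).det)⁻¹) (-δ / (P r).det ^ 2) r := by
    simpa [one_div, neg_div] using (hasDerivAt_const r (1 : ℂ)).fun_div hΔ h0
  have h0' : P r 0 0 * P r 1 1 - P r 0 1 * P r 1 0 ≠ 0 := by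
    rwa [Matrix.det_fin_two] at h0
  have hinv : ∀ s, ∀ i j, (P s)⁻¹ i j = ((P s).det)⁻¹ * adjugate (P s) i j := by
    intro s i j
    rw [Matrix.inv_def, Ring.inverse_eq_inv']
    simp
  intro i j
  fin_cases i <;> fin_cases j
  · have hfun : (fun s => (P s)⁻¹ 0 0) = fun s => ((P s).det)⁻¹ * P s 1 1 := by
      funext s; rw [hinv s 0 0, Matrix.adjugate_fin_two]; simp
    show HasDerivAt (fun s => (P s)⁻¹ 0 0) _ r
    rw [hfun]
    convert hI.fun_mul (hP 1 1) using 1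
    · rfl
    simp only [Matrix.neg_apply, Matrix.mul_apply, Fin.sum_univ_two, hinv r,
      Matrix.adjugate_fin_two, Matrix.det_fin_two, Matrix.cons_val_zero, Matrix.cons_val_one,
      Matrix.head_cons, Matrix.head_fin_const, Matrix.cons_val', Matrix.empty_val',
      Matrix.cons_val_fin_one, hδ, Fin.zero_eta, Fin.mk_one, Fin.isValue, Matrix.of_apply]
    field_simp
    ring
  · have hfun : (fun s => (P s)⁻¹ 0 1) = fun s => ((P s).det)⁻¹ * (-P s 0 1) := by
      funext s; rw [hinv s 0 1, Matrix.adjugate_fin_two]; simp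
    show HasDerivAt (fun s => (P s)⁻¹ 0 1) _ r
    rw [hfun]
    convert hI.fun_mul (hP 0 1).fun_neg using 1
    · rfl
    simp only [Matrix.neg_apply, Matrix.mul_apply, Fin.sum_univ_two, hinv r,
      Matrix.adjugate_fin_two, Matrix.det_fin_two, Matrix.cons_val_zero, Matrix.cons_val_one,
      Matrix.head_cons, Matrix.head_fin_const, Matrix.cons_val', Matrix.empty_val',
      Matrix.cons_val_fin_one, hδ, Fin.zero_eta, Fin.mk_one, Fin.isValue, Matrix.of_apply]
    field_simp
    ring
  · have hfun : (fun s => (P s)⁻¹ 1 0) = fun s => ((P s).det)⁻¹ * (-P s 1 0) := by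
      funext s; rw [hinv s 1 0, Matrix.adjugate_fin_two]; simp
    show HasDerivAt (fun s => (P s)⁻¹ 1 0) _ r
    rw [hfun]
    convert hI.fun_mul (hP 1 0).fun_neg using 1
    · rfl
    simp only [Matrix.neg_apply, Matrix.mul_apply, Fin.sum_univ_two, hinv r,
      Matrix.adjugate_fin_two, Matrix.det_fin_two, Matrix.cons_val_zero, Matrix.cons_val_one,
      Matrix.head_cons, Matrix.head_fin_const, Matrix.cons_val', Matrix.empty_val',
      Matrix.cons_val_fin_one, hδ, Fin.zero_eta, Fin.mk_one, Fin.isValue, Matrix.of_apply]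
    field_simp
    ring
  · have hfun : (fun s => (P s)⁻¹ 1 1) = fun s => ((P s).det)⁻¹ * P s 0 0 := by
      funext s; rw [hinv s 1 1, Matrix.adjugate_fin_two]; simp
    show HasDerivAt (fun s => (P s)⁻¹ 1 1) _ r
    rw [hfun]
    convert hI.fun_mul (hP 0 0) using 1
    · rfl
    simp only [Matrix.neg_apply, Matrix.mul_apply, Fin.sum_univ_two, hinv r,
      Matrix.adjugate_fin_two, Matrix.det_fin_two, Matrix.cons_val_zero, Matrix.cons_val_one,
      Matrix.head_cons, Matrix.head_fin_const, Matrix.cons_val', Matrix.empty_val',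
      Matrix.cons_val_fin_one, hδ, Fin.zero_eta, Fin.mk_one, Fin.isValue, Matrix.of_apply]
    field_simp
    ring
lemma keyalg (A N P Q S : Matrix (Fin 2) (Fin 2) ℂ) (c dγ : ℂ)
    (hPN : P * N = 1) :
    -(N * (dγ • (A * P)) * N) * Q + N * (dγ • ((c • S) * P + A * Q))
      = (dγ * c) • (N * S * P) := by
  have h2 : N * (A * P) * N * Q = N * (A * Q) := by
    have : N * (A * P) * N * Q = N * A * (P * N) * Q := by noncomm_ring
    rw [this, hPN, Matrix.mul_one, Matrix.mul_assoc]
  rw [mul_smul_comm, Matrix.smul_mul, ← smul_neg, Matrix.smul_mul, mul_smul_comm,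
    ← smul_add, mul_smul]
  congr 1
  rw [Matrix.neg_mul, Matrix.mul_add, Matrix.smul_mul, mul_smul_comm, Matrix.mul_assoc N S P]
  rw [h2]
  abel

include hV hΦ in
lemma pds_cont (i j : Fin 2) : ContinuousOn (fun p => pds Φ p i j) V := by
  have heqon : EqOn (fun p => pds Φ p i j)
      (fun p => fderiv ℂ (fun q => Φ q i j) p (0, 1)) V := fun p hp =>
    (hasDerivAt_slice_snd (hdiff_entry hV Φ hΦ i j p hp)).deriv
  exact (((hΦ i j).continuousOn_fderiv_of_isOpen hV one_le_two).clm_apply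
    continuousOn_const).congr heqon

/-- Variational formula for the `t`-dependence of the normalized
solution `Φ` (with `Φ(x₀,t) = I`) of the Wronskian form of the Heun-type equation
`φ'' + μ/(x(x−1)(x−t))·φ = 0`:
`∂Φ/∂t(γ(1),t) = −μ·Φ(γ(1),t)·∫₀¹ Λ(γ(r))·γ'(r)/(γ(r)(γ(r)−1)(γ(r)−t)²) dr`, with
`Λ(y) = Φ(y,t)⁻¹·σ₋·Φ(y,t)`. -/
theorem heun_variation_in_t
    (μ x₀ : ℂ) (V : Set (ℂ × ℂ)) (hV : IsOpen V)
    (hVreg : ∀ p ∈ V, p.1 ≠ 0 ∧ p.1 ≠ 1 ∧ p.1 ≠ p.2)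
    (Φ : ℂ × ℂ → Matrix (Fin 2) (Fin 2) ℂ)
    (hΦ : ∀ i j, ContDiffOn ℂ 2 (fun p => Φ p i j) V)
    (hinv : ∀ p ∈ V, IsUnit (Φ p))
    (heq : ∀ p ∈ V,
      pdx Φ p = !![0, 1; -μ / (p.1 * (p.1 - 1) * (p.1 - p.2)), 0] * Φ p)
    (hnorm : ∀ t : ℂ, (x₀, t) ∈ V → Φ (x₀, t) = 1)
    (t : ℂ) (γ : ℝ → ℂ)
    (hγ : ContDiffOn ℝ 1 γ (Set.Icc 0 1))
    (hγ0 : γ 0 = x₀)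
    (hγV : ∀ r ∈ Set.Icc (0 : ℝ) 1, (γ r, t) ∈ V) :
    pds Φ (γ 1, t) =
      (-μ) • (Φ (γ 1, t) *
        Matrix.of fun i j =>
          ∫ r in (0 : ℝ)..1,
            ((Φ (γ r, t))⁻¹ * sigmaMinus * Φ (γ r, t)) i j *
              derivWithin γ (Set.Icc 0 1) r /
                (γ r * (γ r - 1) * (γ r - t) ^ 2)) := by
  have hx0t : (x₀, t) ∈ V := by
    have := hγV 0 (by constructor <;> norm_num)
    rwa [hγ0] at this
  have hq' : ∀ p ∈ V, pdx Φ p = AA μ p * Φ p := heq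
  have hdet : ∀ r ∈ Icc (0 : ℝ) 1, (Φ (γ r, t)).det ≠ 0 := fun r hr =>
    ((Matrix.isUnit_iff_isUnit_det _).mp (hinv _ (hγV r hr))).ne_zero
  -- continuity facts on [0,1]
  have hγc : ContinuousOn γ (Icc 0 1) := hγ.continuousOn
  have hpath : ContinuousOn (fun r => ((γ r, t) : ℂ × ℂ)) (Icc 0 1) :=
    hγc.prodMk continuousOn_const
  have hPc : ∀ i j : Fin 2, ContinuousOn (fun r => Φ (γ r, t) i j) (Icc 0 1) := fun i j =>
    ((hΦ i j).continuousOn).comp hpath hγV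
  have hQc : ∀ i j : Fin 2, ContinuousOn (fun r => pds Φ (γ r, t) i j) (Icc 0 1) := fun i j =>
    (pds_cont hV Φ hΦ i j).comp hpath hγV
  have hdetc : ContinuousOn (fun r => (Φ (γ r, t)).det) (Icc 0 1) := by
    have hfun : (fun r => (Φ (γ r, t)).det)
        = fun r => Φ (γ r, t) 0 0 * Φ (γ r, t) 1 1 - Φ (γ r, t) 0 1 * Φ (γ r, t) 1 0 :=
      funext fun r => Matrix.det_fin_two _
    rw [hfun]
    exact ((hPc 0 0).mul (hPc 1 1)).sub ((hPc 0 1).mul (hPc 1 0))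
  have hNc : ∀ i j : Fin 2, ContinuousOn (fun r => (Φ (γ r, t))⁻¹ i j) (Icc 0 1) := by
    intro i j
    have hfun : (fun r => (Φ (γ r, t))⁻¹ i j)
        = fun r => ((Φ (γ r, t)).det)⁻¹ * adjugate (Φ (γ r, t)) i j := by
      funext r; rw [Matrix.inv_def, Ring.inverse_eq_inv']; simp
    rw [hfun]
    apply (hdetc.inv₀ hdet).mul
    fin_cases i <;> fin_cases j <;>
      simp only [Matrix.adjugate_fin_two, Fin.zero_eta, Fin.mk_one, Fin.isValue,
        Matrix.cons_val_zero, Matrix.cons_val_one, Matrix.head_cons, Matrix.head_fin_const,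
        Matrix.cons_val', Matrix.empty_val', Matrix.cons_val_fin_one]
    · exact hPc 1 1
    · exact (hPc 0 1).neg
    · exact (hPc 1 0).neg
    · exact hPc 0 0
  have hdγc : ContinuousOn (fun r => derivWithin γ (Icc 0 1) r) (Icc 0 1) :=
    hγ.continuousOn_derivWithin (uniqueDiffOn_Icc one_pos) le_rfl
  have hD0 : ∀ r ∈ Icc (0 : ℝ) 1, γ r * (γ r - 1) * (γ r - t) ^ 2 ≠ 0 := by
    intro r hr
    obtain ⟨h0, h1, h2⟩ := hVreg _ (hγV r hr)
    exact mul_ne_zero (mul_ne_zero h0 (sub_ne_zero.mpr h1)) (pow_ne_zero _ (sub_ne_zero.mpr h2))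
  have hDc : ContinuousOn (fun r => γ r * (γ r - 1) * (γ r - t) ^ 2) (Icc 0 1) :=
    (hγc.mul (hγc.sub continuousOn_const)).mul ((hγc.sub continuousOn_const).pow 2)
  have hNσPfun : ∀ i j : Fin 2, (fun r => ((Φ (γ r, t))⁻¹ * sigmaMinus * Φ (γ r, t)) i j)
      = fun r => (Φ (γ r, t))⁻¹ i 1 * Φ (γ r, t) 0 j := by
    intro i j; funext r; simp [sigmaMinus, Matrix.mul_apply, Fin.sum_univ_two]
  have hIc : ∀ i j : Fin 2, ContinuousOn (fun r =>
      ((Φ (γ r, t))⁻¹ * sigmaMinus * Φ (γ r, t)) i j * derivWithin γ (Icc 0 1) r /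
        (γ r * (γ r - 1) * (γ r - t) ^ 2)) (Icc 0 1) := by
    intro i j
    apply ContinuousOn.div _ hDc hD0
    apply ContinuousOn.mul _ hdγc
    rw [hNσPfun i j]
    exact (hNc i 1).mul (hPc 0 j)
  -- pds Φ vanishes at the base point
  have hΨ0 : pds Φ (x₀, t) = 0 := by
    ext i j
    have hmem : ∀ᶠ s in 𝓝 t, (x₀, s) ∈ V :=
      (continuousAt_const.prodMk continuousAt_id).preimage_mem_nhds (hV.mem_nhds hx0t)
    have hev : (fun s => Φ (x₀, s) i j) =ᶠ[𝓝 t]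
        fun _ => (1 : Matrix (Fin 2) (Fin 2) ℂ) i j := by
      filter_upwards [hmem] with s hs
      rw [hnorm s hs]
    have : pds Φ (x₀, t) i j = deriv (fun s => Φ (x₀, s) i j) t := rfl
    rw [this, hev.deriv_eq, deriv_const]
    simp
  -- the fundamental theorem of calculus for g = Φ⁻¹ ⬝ ∂ₜΦ along γ
  have hstar : ∀ i j : Fin 2,
      (∫ r in (0 : ℝ)..1,
        ((Φ (γ r, t))⁻¹ * sigmaMinus * Φ (γ r, t)) i j * derivWithin γ (Icc 0 1) r /
          (γ r * (γ r - 1) * (γ r - t) ^ 2)) * (-μ)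
      = ((Φ (γ 1, t))⁻¹ * pds Φ (γ 1, t)) i j := by
    intro i j
    have hgc : ContinuousOn (fun r => ((Φ (γ r, t))⁻¹ * pds Φ (γ r, t)) i j) (Icc 0 1) := by
      have hfun : (fun r => ((Φ (γ r, t))⁻¹ * pds Φ (γ r, t)) i j)
          = fun r => (Φ (γ r, t))⁻¹ i 0 * pds Φ (γ r, t) 0 j
              + (Φ (γ r, t))⁻¹ i 1 * pds Φ (γ r, t) 1 j := by
        funext r; simp [Matrix.mul_apply, Fin.sum_univ_two]
      rw [hfun]
      exact ((hNc i 0).mul (hQc 0 j)).add ((hNc i 1).mul (hQc 1 j))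
    have hderiv : ∀ r ∈ Ioo (0 : ℝ) 1,
        HasDerivAt (fun s => ((Φ (γ s, t))⁻¹ * pds Φ (γ s, t)) i j)
          (((Φ (γ r, t))⁻¹ * sigmaMinus * Φ (γ r, t)) i j * derivWithin γ (Icc 0 1) r /
            (γ r * (γ r - 1) * (γ r - t) ^ 2) * (-μ)) r := by
      intro r hr
      have hrI : r ∈ Icc (0 : ℝ) 1 := Ioo_subset_Icc_self hr
      have hqV : ((γ r, t) : ℂ × ℂ) ∈ V := hγV r hrI
      have hγd : HasDerivAt γ (derivWithin γ (Icc 0 1) r) r := by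
        have hnh : Icc (0 : ℝ) 1 ∈ 𝓝 r := Icc_mem_nhds hr.1 hr.2
        have h1 : DifferentiableAt ℝ γ r := (hγ.contDiffAt hnh).differentiableAt one_ne_zero
        rw [derivWithin_of_mem_nhds hnh]
        exact h1.hasDerivAt
      have hPd : ∀ a b : Fin 2, HasDerivAt (fun s => Φ (γ s, t) a b)
          ((AA μ (γ r, t) * Φ (γ r, t)) a b * derivWithin γ (Icc 0 1) r) r :=
        fun a b => comp_path (phi_x_hasDerivAt μ hV Φ hΦ hq' hqV a b) hγd
      have hQd : ∀ a b : Fin 2, HasDerivAt (fun s => pds Φ (γ s, t) a b)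
          ((BB μ (γ r, t) * Φ (γ r, t) + AA μ (γ r, t) * pds Φ (γ r, t)) a b
            * derivWithin γ (Icc 0 1) r) r :=
        fun a b => comp_path (pds_entry_hasDerivAt μ hV hVreg Φ hΦ hq' hqV a b) hγd
      have hdet_r : (Φ (γ r, t)).det ≠ 0 := hdet r hrI
      have hNd := inv2_hasDerivAt (P := fun s => Φ (γ s, t))
        (P' := derivWithin γ (Icc 0 1) r • (AA μ (γ r, t) * Φ (γ r, t)))
        (fun a b => by
          simpa [Matrix.smul_apply, smul_eq_mul, mul_comm] using hPd a b) hdet_r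
      have hfun : (fun s => ((Φ (γ s, t))⁻¹ * pds Φ (γ s, t)) i j)
          = fun s => (Φ (γ s, t))⁻¹ i 0 * pds Φ (γ s, t) 0 j
              + (Φ (γ s, t))⁻¹ i 1 * pds Φ (γ s, t) 1 j := by
        funext s; simp [Matrix.mul_apply, Fin.sum_univ_two]
      rw [hfun]
      have hD := ((hNd i 0).fun_mul (hQd 0 j)).fun_add ((hNd i 1).fun_mul (hQd 1 j))
      convert hD using 1
      · rfl
      -- identify the derivative value
      have hPN : Φ (γ r, t) * (Φ (γ r, t))⁻¹ = 1 :=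
        Matrix.mul_nonsing_inv _ hdet_r.isUnit
      have hBB : BB μ (γ r, t)
          = (-μ / (γ r * (γ r - 1) * (γ r - t) ^ 2)) • sigmaMinus := by
        ext a b
        fin_cases a <;> fin_cases b <;> simp [BB, sigmaMinus]
      have matid := keyalg (AA μ (γ r, t)) ((Φ (γ r, t))⁻¹) (Φ (γ r, t)) (pds Φ (γ r, t))
        sigmaMinus (-μ / (γ r * (γ r - 1) * (γ r - t) ^ 2)) (derivWithin γ (Icc 0 1) r) hPN
      rw [← hBB] at matid
      have hentry := congrArg (fun M => M i j) matid
      simp only [Matrix.add_apply, Matrix.mul_apply, Matrix.smul_apply, Matrix.neg_apply,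
        Fin.sum_univ_two, smul_eq_mul, sigmaMinus, AA, BB, Matrix.of_apply, Matrix.cons_val',
        Matrix.cons_val_zero, Matrix.cons_val_one, Matrix.head_cons, Matrix.head_fin_const,
        Matrix.empty_val', Matrix.cons_val_fin_one] at hentry ⊢
      linear_combination -hentry
    have hint : IntervalIntegrable (fun r =>
        ((Φ (γ r, t))⁻¹ * sigmaMinus * Φ (γ r, t)) i j * derivWithin γ (Icc 0 1) r /
          (γ r * (γ r - 1) * (γ r - t) ^ 2) * (-μ)) MeasureTheory.volume 0 1 := by
      apply ContinuousOn.intervalIntegrable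
      rw [uIcc_of_le zero_le_one]
      exact (hIc i j).mul continuousOn_const
    have hftc := intervalIntegral.integral_eq_sub_of_hasDeriv_right_of_le zero_le_one
      hgc (fun x hx => (hderiv x hx).hasDerivWithinAt) hint
    have hg0 : ((Φ (γ 0, t))⁻¹ * pds Φ (γ 0, t)) i j = 0 := by
      rw [hγ0, hΨ0, mul_zero]
      simp
    rw [hg0, sub_zero] at hftc
    rw [← hftc, intervalIntegral.integral_mul_const]
  -- assemble
  have hdet1 : (Φ (γ 1, t)).det ≠ 0 := hdet 1 (by constructor <;> norm_num)
  have hPN1 : Φ (γ 1, t) * (Φ (γ 1, t))⁻¹ = 1 :=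
    Matrix.mul_nonsing_inv _ hdet1.isUnit
  have hRHS : (-μ) • (Φ (γ 1, t) *
      Matrix.of fun i j =>
        ∫ r in (0 : ℝ)..1,
          ((Φ (γ r, t))⁻¹ * sigmaMinus * Φ (γ r, t)) i j *
            derivWithin γ (Set.Icc 0 1) r /
              (γ r * (γ r - 1) * (γ r - t) ^ 2))
      = Φ (γ 1, t) * ((Φ (γ 1, t))⁻¹ * pds Φ (γ 1, t)) := by
    rw [← Matrix.mul_smul]
    congr 1
    have : ((-μ) • Matrix.of fun i j =>
        ∫ r in (0 : ℝ)..1,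
          ((Φ (γ r, t))⁻¹ * sigmaMinus * Φ (γ r, t)) i j *
            derivWithin γ (Set.Icc 0 1) r /
              (γ r * (γ r - 1) * (γ r - t) ^ 2))
        = Matrix.of fun i j =>
          (∫ r in (0 : ℝ)..1,
            ((Φ (γ r, t))⁻¹ * sigmaMinus * Φ (γ r, t)) i j *
              derivWithin γ (Set.Icc 0 1) r /
                (γ r * (γ r - 1) * (γ r - t) ^ 2)) * (-μ) := by
      ext a b
      simp [Matrix.smul_apply, smul_eq_mul, mul_comm]
    rw [this]
    ext a b
    rw [Matrix.of_apply, hstar a b]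
  rw [hRHS, ← Matrix.mul_assoc, hPN1, Matrix.one_mul]

end Main
end

section
/- Fix t, x₀ ∈ ℂ. Let V ⊆ ℂ × ℂ be open such that for every (x,μ) ∈ V one has x ≠ 0, x ≠ 1 and x ≠ t. Let Φ : ℂ × ℂ → Matrix (Fin 2) (Fin 2) ℂ be twice continuously ℂ-differentiable on V with Φ(x,μ) invertible for all (x,μ) ∈ V, satisfying ∂Φ/∂x(x,μ) = ![![0, 1],![−μ/(x·(x−1)·(x−t)), 0]] · Φ(x,μ) on V and Φ(x₀,μ) equal to the identity matrix for every μ with (x₀,μ) ∈ V. Fix μ ∈ ℂ and let γ : [0,1] → ℂ be continuously differentiable with γ(0) = x₀ and (γ(r), μ) ∈ V for all r ∈ [0,1]. Then ∂Φ/∂μ(γ(1),μ) = −Φ(γ(1),μ) · ∫₀¹ Λ(γ(r)) · γ'(r) / (γ(r)·(γ(r)−1)·(γ(r)−t)) dr, where Λ(y) = Φ(y,μ)⁻¹ · σ₋ · Φ(y,μ). -/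
open Set

lemma hda_snd {E : Type*} [NormedAddCommGroup E] [NormedSpace ℂ E]
    {g : ℂ × ℂ → E} {q : ℂ × ℂ} (hd : DifferentiableAt ℂ g q) :
    HasDerivAt (fun z => g (q.1, z)) (fderiv ℂ g q ((0 : ℂ), (1 : ℂ))) q.2 := by
  have hcurve : HasDerivAt (fun z : ℂ => ((q.1 : ℂ), z)) ((0 : ℂ), (1 : ℂ)) q.2 :=
    (hasDerivAt_const _ _).prodMk (hasDerivAt_id _)
  have := hd.hasFDerivAt.comp_hasDerivAt q.2 (by simpa using hcurve)
  simpa [Function.comp_def] using this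

lemma hda_fst {E : Type*} [NormedAddCommGroup E] [NormedSpace ℂ E]
    {g : ℂ × ℂ → E} {q : ℂ × ℂ} (hd : DifferentiableAt ℂ g q) :
    HasDerivAt (fun z => g (z, q.2)) (fderiv ℂ g q ((1 : ℂ), (0 : ℂ))) q.1 := by
  have hcurve : HasDerivAt (fun z : ℂ => (z, (q.2 : ℂ))) ((1 : ℂ), (0 : ℂ)) q.1 :=
    (hasDerivAt_id _).prodMk (hasDerivAt_const _ _)
  have := hd.hasFDerivAt.comp_hasDerivAt q.1 (by simpa using hcurve)
  simpa [Function.comp_def] using this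

lemma comp_along {h : ℂ → ℂ} {d : ℂ} {γ : ℝ → ℂ} {g' : ℂ} {s : Set ℝ} {r : ℝ}
    (hh : HasDerivAt h d (γ r)) (hγ : HasDerivWithinAt γ g' s r) :
    HasDerivWithinAt (fun u => h (γ u)) (d * g') s r := by
  have := (hh.hasFDerivAt.restrictScalars ℝ).comp_hasDerivWithinAt r hγ
  simpa [mul_comm, Function.comp_def] using this

/-- Clairaut-type lemma. -/
lemma mixed_deriv {g : ℂ × ℂ → ℂ} {V : Set (ℂ × ℂ)} (hV : IsOpen V)
    (hg : ContDiffOn ℂ 2 g V) {p : ℂ × ℂ} (hp : p ∈ V) :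
    HasDerivAt (fun x => deriv (fun z => g (x, z)) p.2)
      (deriv (fun z => deriv (fun x => g (x, z)) p.1) p.2) p.1 := by
  have hgat : ∀ q ∈ V, ContDiffAt ℂ 2 g q := fun q hq =>
    (hg.contDiffAt (hV.mem_nhds hq))
  have hdiff : ∀ q ∈ V, DifferentiableAt ℂ g q := fun q hq =>
    (hgat q hq).differentiableAt (by norm_num)
  set F := fderiv ℂ g with hF
  have hFc : ContDiffOn ℂ 1 F V :=
    hg.fderiv_of_isOpen hV (by norm_num : (1:WithTop ℕ∞) + 1 ≤ 2)
  have hFd : DifferentiableAt ℂ F p :=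
    (hFc.contDiffAt (hV.mem_nhds hp)).differentiableAt one_ne_zero
  have hmemx : ∀ᶠ x in nhds p.1, (x, p.2) ∈ V := by
    have hc : Continuous fun x : ℂ => (x, p.2) := by fun_prop
    have := hc.continuousAt (x := p.1) |>.preimage_mem_nhds
      (hV.mem_nhds (by simpa using hp))
    exact this
  have hmemz : ∀ᶠ z in nhds p.2, (p.1, z) ∈ V := by
    have hc : Continuous fun z : ℂ => (p.1, z) := by fun_prop
    have := hc.continuousAt (x := p.2) |>.preimage_mem_nhds
      (hV.mem_nhds (by simpa using hp))
    exact this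
  have heq1 : (fun x => deriv (fun z => g (x, z)) p.2) =ᶠ[nhds p.1]
      fun x => F (x, p.2) ((0:ℂ), (1:ℂ)) := by
    filter_upwards [hmemx] with x hx
    exact (hda_snd (hdiff _ hx)).deriv
  have hFx : HasDerivAt (fun x => F (x, p.2)) (fderiv ℂ F p ((1:ℂ),(0:ℂ))) p.1 :=
    hda_fst hFd
  have hL : HasDerivAt (fun x => F (x, p.2) ((0:ℂ),(1:ℂ)))
      (fderiv ℂ F p ((1:ℂ),(0:ℂ)) ((0:ℂ),(1:ℂ))) p.1 := by
    have := (ContinuousLinearMap.apply ℂ ℂ (((0:ℂ),(1:ℂ)) : ℂ × ℂ)).hasFDerivAt.comp_hasDerivAt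
      p.1 hFx
    simpa [Function.comp_def] using this
  have hLHS : HasDerivAt (fun x => deriv (fun z => g (x, z)) p.2)
      (fderiv ℂ F p ((1:ℂ),(0:ℂ)) ((0:ℂ),(1:ℂ))) p.1 := hL.congr_of_eventuallyEq heq1
  have heq2 : (fun z => deriv (fun x => g (x, z)) p.1) =ᶠ[nhds p.2]
      fun z => F (p.1, z) ((1:ℂ), (0:ℂ)) := by
    filter_upwards [hmemz] with z hz
    exact (hda_fst (hdiff _ hz)).deriv
  have hFz : HasDerivAt (fun z => F (p.1, z)) (fderiv ℂ F p ((0:ℂ),(1:ℂ))) p.2 :=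
    hda_snd hFd
  have hR : HasDerivAt (fun z => F (p.1, z) ((1:ℂ),(0:ℂ)))
      (fderiv ℂ F p ((0:ℂ),(1:ℂ)) ((1:ℂ),(0:ℂ))) p.2 := by
    have := (ContinuousLinearMap.apply ℂ ℂ (((1:ℂ),(0:ℂ)) : ℂ × ℂ)).hasFDerivAt.comp_hasDerivAt
      p.2 hFz
    simpa [Function.comp_def] using this
  have hval : deriv (fun z => deriv (fun x => g (x, z)) p.1) p.2
      = fderiv ℂ F p ((0:ℂ),(1:ℂ)) ((1:ℂ),(0:ℂ)) := by
    rw [heq2.deriv_eq]; exact hR.deriv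
  rw [hval]
  have hsymm := ((hgat p hp).isSymmSndFDerivAt (by simp [minSmoothness_of_isRCLikeNormedField])) ((1:ℂ),(0:ℂ)) ((0:ℂ),(1:ℂ))
  rw [← hsymm]
  exact hLHS



/-- Variational formula for the `μ`-dependence of the normalized
solution `Φ` (with `Φ(x₀,μ) = I`) of the Wronskian form of the Heun-type equation
`φ'' + μ/(x(x−1)(x−t))·φ = 0`:
`∂Φ/∂μ(γ(1),μ) = −Φ(γ(1),μ)·∫₀¹ Λ(γ(r))·γ'(r)/(γ(r)(γ(r)−1)(γ(r)−t)) dr`, with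
`Λ(y) = Φ(y,μ)⁻¹·σ₋·Φ(y,μ)`. -/
theorem heun_variation_in_mu
    (t x₀ : ℂ) (V : Set (ℂ × ℂ)) (hV : IsOpen V)
    (hVreg : ∀ p ∈ V, p.1 ≠ 0 ∧ p.1 ≠ 1 ∧ p.1 ≠ t)
    (Φ : ℂ × ℂ → Matrix (Fin 2) (Fin 2) ℂ)
    (hΦ : ∀ i j, ContDiffOn ℂ 2 (fun p => Φ p i j) V)
    (hinv : ∀ p ∈ V, IsUnit (Φ p))
    (heq : ∀ p ∈ V,
      pdx Φ p = !![0, 1; -p.2 / (p.1 * (p.1 - 1) * (p.1 - t)), 0] * Φ p)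
    (hnorm : ∀ μ : ℂ, (x₀, μ) ∈ V → Φ (x₀, μ) = 1)
    (μ : ℂ) (γ : ℝ → ℂ)
    (hγ : ContDiffOn ℝ 1 γ (Set.Icc 0 1))
    (hγ0 : γ 0 = x₀)
    (hγV : ∀ r ∈ Set.Icc (0 : ℝ) 1, (γ r, μ) ∈ V) :
    pds Φ (γ 1, μ) =
      -(Φ (γ 1, μ) *
        Matrix.of fun i j =>
          ∫ r in (0 : ℝ)..1,
            ((Φ (γ r, μ))⁻¹ * sigmaMinus * Φ (γ r, μ)) i j *
              derivWithin γ (Set.Icc 0 1) r /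
                (γ r * (γ r - 1) * (γ r - t))) := by
  have hΦd : ∀ p ∈ V, ∀ i j : Fin 2, DifferentiableAt ℂ (fun q => Φ q i j) p := fun p hp i j =>
    ((hΦ i j).contDiffAt (hV.mem_nhds hp)).differentiableAt (by norm_num)
  set c : ℂ → ℂ := fun x => x * (x - 1) * (x - t) with hc
  have hcne : ∀ p ∈ V, c p.1 ≠ 0 := by
    intro p hp
    obtain ⟨h0, h1, ht⟩ := hVreg p hp
    simp only [hc]
    exact mul_ne_zero (mul_ne_zero h0 (sub_ne_zero.2 h1)) (sub_ne_zero.2 ht)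
  set A : ℂ → ℂ → Matrix (Fin 2) (Fin 2) ℂ := fun x z => !![0, 1; -z / c x, 0] with hA
  -- derivative in second variable
  have h1 : ∀ p ∈ V, ∀ i j : Fin 2,
      HasDerivAt (fun z => Φ (p.1, z) i j) (deriv (fun z => Φ (p.1, z) i j) p.2) p.2 := by
    intro p hp i j
    exact (hda_snd (hΦd p hp i j)).differentiableAt.hasDerivAt
  -- derivative in first variable, with value from the ODE
  have h2 : ∀ p ∈ V, ∀ i j : Fin 2,
      HasDerivAt (fun x => Φ (x, p.2) i j) ((A p.1 p.2 * Φ p) i j) p.1 := by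
    intro p hp i j
    have hd2 : HasDerivAt (fun x => Φ (x, p.2) i j)
        (deriv (fun x => Φ (x, p.2) i j) p.1) p.1 :=
      (hda_fst (hΦd p hp i j)).differentiableAt.hasDerivAt
    have hval : deriv (fun x => Φ (x, p.2) i j) p.1 = (A p.1 p.2 * Φ p) i j := by
      have := congrFun (congrFun (heq p hp) i) j
      simpa [pdx, hA, hc, Matrix.of_apply] using this
    rwa [hval] at hd2
  -- Clairaut lemma (to be inserted as `mixed_deriv` from file a)
  -- h3: derivative in x of pds-entry
  have h3 : ∀ x : ℂ, (x, μ) ∈ V → ∀ i j : Fin 2,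
      HasDerivAt (fun x' => deriv (fun z => Φ (x', z) i j) μ)
        ((A x μ * (Matrix.of fun i j => deriv (fun z => Φ (x, z) i j) μ)
          + (-(c x)⁻¹) • (sigmaMinus * Φ (x, μ))) i j) x := by
    intro x hxV i j
    have hmix := mixed_deriv hV (hΦ i j) (p := (x, μ)) hxV
    -- rewrite the value of hmix
    have hmemz : ∀ᶠ z in nhds μ, ((x : ℂ), z) ∈ V := by
      have hcz : Continuous fun z : ℂ => ((x:ℂ), z) := by fun_prop
      have := hcz.continuousAt (x := μ) |>.preimage_mem_nhds (hV.mem_nhds hxV)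
      exact this
    have heqz : (fun z => deriv (fun x' => Φ (x', z) i j) x) =ᶠ[nhds μ]
        fun z => (A x z * Φ (x, z)) i j := by
      filter_upwards [hmemz] with z hz
      exact (h2 (x, z) hz i j).deriv
    have hval : deriv (fun z => deriv (fun x' => Φ (x', z) i j) x) μ
        = ((A x μ * (Matrix.of fun i j => deriv (fun z => Φ (x, z) i j) μ)
          + (-(c x)⁻¹) • (sigmaMinus * Φ (x, μ))) i j) := by
      rw [heqz.deriv_eq]
      have hi : i = 0 ∨ i = 1 := by fin_cases i <;> simp
      rcases hi with rfl | rfl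
      · -- row 0 : (A x z * Φ (x,z)) 0 j = Φ (x,z) 1 j
        have hfun : (fun z => (A x z * Φ (x, z)) (0 : Fin 2) j) = fun z => Φ (x, z) 1 j := by
          funext z
          simp [hA, Matrix.mul_apply, Fin.sum_univ_two]
        rw [hfun, (h1 (x, μ) hxV 1 j).deriv]
        simp only [hA, sigmaMinus, Matrix.add_apply, Matrix.smul_apply, Matrix.mul_apply,
          Fin.sum_univ_two, Matrix.of_apply, Matrix.cons_val', Matrix.cons_val_zero,
          Matrix.cons_val_one, Matrix.head_cons, Matrix.empty_val',
          Matrix.cons_val_fin_one, smul_eq_mul, Matrix.vecHead, Matrix.vecTail]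
        ring
      · -- row 1
        have hfun : (fun z => (A x z * Φ (x, z)) (1 : Fin 2) j)
            = fun z => (-z / c x) * Φ (x, z) (0 : Fin 2) j := by
          funext z
          simp [hA, Matrix.mul_apply, Fin.sum_univ_two]
        rw [hfun]
        have hd : HasDerivAt (fun z : ℂ => (-z / c x) * Φ (x, z) (0 : Fin 2) j)
            ((-(1 : ℂ) / c x) * Φ (x, μ) 0 j
              + (-μ / c x) * deriv (fun z => Φ (x, z) (0 : Fin 2) j) μ) μ := by
          have hd1 : HasDerivAt (fun z : ℂ => -z / c x) (-(1:ℂ) / c x) μ := by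
            simpa [neg_div] using ((hasDerivAt_id μ).neg.div_const (c x))
          exact hd1.mul (h1 (x, μ) hxV 0 j)
        rw [hd.deriv]
        simp only [hA, sigmaMinus, Matrix.add_apply, Matrix.smul_apply, Matrix.mul_apply,
          Fin.sum_univ_two, Matrix.of_apply, Matrix.cons_val', Matrix.cons_val_zero,
          Matrix.cons_val_one, Matrix.head_cons, Matrix.empty_val',
          Matrix.cons_val_fin_one, smul_eq_mul, Matrix.vecHead, Matrix.vecTail]
        ring
    rw [← hval]
    exact hmix
  -- path data
  set γ' : ℝ → ℂ := fun r => derivWithin γ (Set.Icc 0 1) r with hγ'def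
  have hUD : UniqueDiffOn ℝ (Icc (0:ℝ) 1) := uniqueDiffOn_Icc one_pos
  have hγdiff : ∀ r ∈ Icc (0:ℝ) 1, HasDerivWithinAt γ (γ' r) (Icc 0 1) r := fun r hr =>
    ((hγ.differentiableOn one_ne_zero) r hr).hasDerivWithinAt
  set Pm : ℝ → Matrix (Fin 2) (Fin 2) ℂ := fun r => Φ (γ r, μ) with hPmdef
  set Ψ : ℝ → Matrix (Fin 2) (Fin 2) ℂ :=
    fun r => Matrix.of fun i j => deriv (fun z => Φ (γ r, z) i j) μ with hΨdef
  set Pd : ℝ → Matrix (Fin 2) (Fin 2) ℂ := fun r => γ' r • (A (γ r) μ * Pm r) with hPddef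
  set Ψd : ℝ → Matrix (Fin 2) (Fin 2) ℂ :=
    fun r => γ' r • (A (γ r) μ * Ψ r + (-(c (γ r))⁻¹) • (sigmaMinus * Pm r)) with hΨddef
  have hPder : ∀ r ∈ Icc (0:ℝ) 1, ∀ i j : Fin 2,
      HasDerivWithinAt (fun u => Pm u i j) (Pd r i j) (Icc 0 1) r := by
    intro r hr i j
    have h := comp_along (h2 (γ r, μ) (hγV r hr) i j) (hγdiff r hr)
    simpa [hPddef, hPmdef, Matrix.smul_apply, smul_eq_mul, mul_comm] using h
  have hΨder : ∀ r ∈ Icc (0:ℝ) 1, ∀ i j : Fin 2,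
      HasDerivWithinAt (fun u => Ψ u i j) (Ψd r i j) (Icc 0 1) r := by
    intro r hr i j
    have h := comp_along (h3 (γ r) (hγV r hr) i j) (hγdiff r hr)
    have hval : Ψd r i j
        = ((A (γ r) μ * Ψ r + (-(c (γ r))⁻¹) • (sigmaMinus * Pm r)) i j) * γ' r := by
      simp only [hΨddef, Matrix.smul_apply, smul_eq_mul, Matrix.add_apply]
      ring
    rw [show (fun u => Ψ u i j) = fun u => deriv (fun z => Φ (γ u, z) i j) μ from rfl, hval]
    exact h
  -- inverse matrix along the path
  set W : ℝ → Matrix (Fin 2) (Fin 2) ℂ := fun r => (Φ (γ r, μ))⁻¹ with hWdef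
  have hdet_unit : ∀ r ∈ Icc (0:ℝ) 1, IsUnit (Pm r).det := fun r hr =>
    (Matrix.isUnit_iff_isUnit_det _).1 (hinv _ (hγV r hr))
  have hdetne : ∀ r ∈ Icc (0:ℝ) 1, (Pm r).det ≠ 0 := fun r hr =>
    (hdet_unit r hr).ne_zero
  have hWP : ∀ r ∈ Icc (0:ℝ) 1, W r * Pm r = 1 := fun r hr =>
    Matrix.nonsing_inv_mul _ (hdet_unit r hr)
  have hPW : ∀ r ∈ Icc (0:ℝ) 1, Pm r * W r = 1 := fun r hr =>
    Matrix.mul_nonsing_inv _ (hdet_unit r hr)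
  have hdetder : ∀ r ∈ Icc (0:ℝ) 1,
      DifferentiableWithinAt ℝ (fun u => (Pm u).det) (Icc 0 1) r := by
    intro r hr
    have hfun : (fun u => (Pm u).det)
        = fun u => Pm u 0 0 * Pm u 1 1 - Pm u 0 1 * Pm u 1 0 := by
      funext u; exact Matrix.det_fin_two _
    rw [hfun]
    exact (((hPder r hr 0 0).differentiableWithinAt.mul
        (hPder r hr 1 1).differentiableWithinAt).sub
      ((hPder r hr 0 1).differentiableWithinAt.mul
        (hPder r hr 1 0).differentiableWithinAt))
  have hWentry : ∀ (u : ℝ) (i j : Fin 2), W u i j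
      = ((Pm u).det)⁻¹ * (!![Pm u 1 1, -(Pm u 0 1); -(Pm u 1 0), Pm u 0 0] i j) := by
    intro u i j
    have : W u = ((Pm u).det)⁻¹ • !![Pm u 1 1, -(Pm u 0 1); -(Pm u 1 0), Pm u 0 0] := by
      rw [hWdef]
      show (Pm u)⁻¹ = _
      rw [Matrix.inv_def, Matrix.adjugate_fin_two, Ring.inverse_eq_inv]
    rw [this, Matrix.smul_apply, smul_eq_mul]
  have hWdiff : ∀ r ∈ Icc (0:ℝ) 1, ∀ i j : Fin 2,
      DifferentiableWithinAt ℝ (fun u => W u i j) (Icc 0 1) r := by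
    intro r hr i j
    have hfun : (fun u => W u i j) = fun u =>
        ((Pm u).det)⁻¹ * (!![Pm u 1 1, -(Pm u 0 1); -(Pm u 1 0), Pm u 0 0] i j) :=
      funext fun u => hWentry u i j
    rw [hfun]
    refine DifferentiableWithinAt.mul ((hdetder r hr).inv (hdetne r hr)) ?_
    have hi : i = 0 ∨ i = 1 := by fin_cases i <;> simp
    have hj : j = 0 ∨ j = 1 := by fin_cases j <;> simp
    rcases hi with rfl | rfl <;> rcases hj with rfl | rfl
    · simpa using (hPder r hr 1 1).differentiableWithinAt
    · simpa using (hPder r hr 0 1).differentiableWithinAt.neg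
    · simpa using (hPder r hr 1 0).differentiableWithinAt.neg
    · simpa using (hPder r hr 0 0).differentiableWithinAt
  set Wd : ℝ → Matrix (Fin 2) (Fin 2) ℂ :=
    fun r => Matrix.of fun i j => derivWithin (fun u => W u i j) (Icc 0 1) r with hWddef
  have hWder : ∀ r ∈ Icc (0:ℝ) 1, ∀ i j : Fin 2,
      HasDerivWithinAt (fun u => W u i j) (Wd r i j) (Icc 0 1) r := fun r hr i j =>
    (hWdiff r hr i j).hasDerivWithinAt
  -- product rule identity
  have hprod : ∀ r ∈ Icc (0:ℝ) 1, Wd r * Pm r + W r * Pd r = 0 := by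
    intro r hr
    ext i j
    have hsum : HasDerivWithinAt (fun u => W u i 0 * Pm u 0 j + W u i 1 * Pm u 1 j)
        ((Wd r i 0 * Pm r 0 j + W r i 0 * Pd r 0 j)
          + (Wd r i 1 * Pm r 1 j + W r i 1 * Pd r 1 j)) (Icc 0 1) r :=
      ((hWder r hr i 0).mul (hPder r hr 0 j)).add ((hWder r hr i 1).mul (hPder r hr 1 j))
    have hconstfn : ∀ u ∈ Icc (0:ℝ) 1,
        W u i 0 * Pm u 0 j + W u i 1 * Pm u 1 j = (1 : Matrix (Fin 2) (Fin 2) ℂ) i j := by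
      intro u hu
      have h := congrFun (congrFun (hWP u hu) i) j
      simpa [Matrix.mul_apply, Fin.sum_univ_two] using h
    have hzero : HasDerivWithinAt (fun u => W u i 0 * Pm u 0 j + W u i 1 * Pm u 1 j)
        0 (Icc 0 1) r :=
      (hasDerivWithinAt_const r (Icc (0:ℝ) 1) ((1 : Matrix (Fin 2) (Fin 2) ℂ) i j)).congr
        hconstfn (hconstfn r hr)
    have hval : (Wd r i 0 * Pm r 0 j + W r i 0 * Pd r 0 j)
        + (Wd r i 1 * Pm r 1 j + W r i 1 * Pd r 1 j) = 0 := by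
      rw [← hsum.derivWithin (hUD r hr)]
      exact hzero.derivWithin (hUD r hr)
    have hgoal : (Wd r * Pm r + W r * Pd r) i j
        = (Wd r i 0 * Pm r 0 j + W r i 0 * Pd r 0 j)
          + (Wd r i 1 * Pm r 1 j + W r i 1 * Pd r 1 j) := by
      simp [Matrix.add_apply, Matrix.mul_apply, Fin.sum_univ_two]; ring
    rw [hgoal, hval]; rfl
  have hWdval : ∀ r ∈ Icc (0:ℝ) 1, Wd r = -(γ' r • (W r * A (γ r) μ)) := by
    intro r hr
    have h0 := hprod r hr
    have h1 : Wd r * Pm r = -(W r * Pd r) := eq_neg_of_add_eq_zero_left h0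
    calc Wd r = Wd r * (Pm r * W r) := by rw [hPW r hr, mul_one]
      _ = (Wd r * Pm r) * W r := by rw [mul_assoc]
      _ = -(W r * Pd r) * W r := by rw [h1]
      _ = -(γ' r • (W r * A (γ r) μ)) := by
          simp only [hPddef, neg_mul]
          rw [mul_smul_comm, smul_mul_assoc, mul_assoc, mul_assoc, hPW r hr, mul_one]
  -- the integrand, literally as in the statement
  set fE : Fin 2 → Fin 2 → ℝ → ℂ := fun i j r =>
    ((Φ (γ r, μ))⁻¹ * sigmaMinus * Φ (γ r, μ)) i j *
      derivWithin γ (Set.Icc 0 1) r / (γ r * (γ r - 1) * (γ r - t)) with hfEdef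
  have hfE_eq : ∀ i j (r : ℝ), fE i j r = (W r * sigmaMinus * Pm r) i j * γ' r / c (γ r) := by
    intro i j r; rfl
  -- continuity facts
  have hWcont : ∀ i j : Fin 2, ContinuousOn (fun s => W s i j) (Icc (0:ℝ) 1) :=
    fun i j r hr => (hWdiff r hr i j).continuousWithinAt
  have hPmcont : ∀ i j : Fin 2, ContinuousOn (fun s => Pm s i j) (Icc (0:ℝ) 1) :=
    fun i j r hr => (hPder r hr i j).differentiableWithinAt.continuousWithinAt
  have hγ'cont : ContinuousOn γ' (Icc (0:ℝ) 1) :=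
    hγ.continuousOn_derivWithin hUD le_rfl
  have hγcont : ContinuousOn γ (Icc (0:ℝ) 1) := hγ.continuousOn
  have hccont : ContinuousOn (fun s => c (γ s)) (Icc (0:ℝ) 1) := by
    simp only [hc]
    exact (hγcont.mul (hγcont.sub continuousOn_const)).mul (hγcont.sub continuousOn_const)
  have hcγne : ∀ s ∈ Icc (0:ℝ) 1, c (γ s) ≠ 0 := fun s hs => hcne (γ s, μ) (hγV s hs)
  have hfcont : ∀ i j : Fin 2, ContinuousOn (fE i j) (Icc (0:ℝ) 1) := by
    intro i j
    have hfun : fE i j = fun s => W s i 1 * Pm s 0 j * γ' s / c (γ s) := by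
      funext s
      rw [hfE_eq]
      congr 1
      simp [sigmaMinus, Matrix.mul_apply, Fin.sum_univ_two]
    rw [hfun]
    exact (((hWcont i 1).mul (hPmcont 0 j)).mul hγ'cont).div hccont hcγne
  have hfint : ∀ (i j : Fin 2), ∀ b ∈ Icc (0:ℝ) 1,
      IntervalIntegrable (fE i j) MeasureTheory.volume 0 b := by
    intro i j b hb
    apply ContinuousOn.intervalIntegrable
    apply (hfcont i j).mono
    rw [uIcc_of_le hb.1]
    exact Icc_subset_Icc le_rfl hb.2
  -- FTC
  have hFTC : ∀ (i j : Fin 2), ∀ r ∈ Ico (0:ℝ) 1,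
      HasDerivWithinAt (fun u => ∫ s in (0:ℝ)..u, fE i j s) (fE i j r) (Ici r) r := by
    intro i j r hr
    have hrIcc : r ∈ Icc (0:ℝ) 1 := ⟨hr.1, hr.2.le⟩
    have hIoc : Ioc r 1 ∈ nhdsWithin r (Ioi r) := Ioc_mem_nhdsGT_of_mem ⟨le_refl r, hr.2⟩
    have hsub : Ioc r 1 ⊆ Icc (0:ℝ) 1 := fun x hx => ⟨hr.1.trans hx.1.le, hx.2⟩
    have hmeas : StronglyMeasurableAtFilter (fE i j) (nhdsWithin r (Ioi r)) :=
      ⟨Ioc r 1, hIoc, ((hfcont i j).mono hsub).aestronglyMeasurable measurableSet_Ioc⟩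
    have hcw : ContinuousWithinAt (fE i j) (Ioi r) r :=
      ((hfcont i j) r hrIcc).mono_of_mem_nhdsWithin (Filter.mem_of_superset hIoc hsub)
    exact intervalIntegral.integral_hasDerivWithinAt_right (hfint i j r hrIcc) hmeas hcw
  -- the conserved quantity, entrywise
  set N : Fin 2 → Fin 2 → ℝ → ℂ := fun i j u =>
    (W u i 0 * Ψ u 0 j + W u i 1 * Ψ u 1 j) + ∫ s in (0:ℝ)..u, fE i j s with hNdef
  have hNcont : ∀ i j : Fin 2, ContinuousOn (N i j) (Icc (0:ℝ) 1) := by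
    intro i j
    have hΨcont : ∀ k : Fin 2, ContinuousOn (fun s => Ψ s k j) (Icc (0:ℝ) 1) :=
      fun k r hr => (hΨder r hr k j).differentiableWithinAt.continuousWithinAt
    have hint : ContinuousOn (fun u => ∫ s in (0:ℝ)..u, fE i j s) (Icc (0:ℝ) 1) := by
      have := intervalIntegral.continuousOn_primitive_interval
        (a := (0:ℝ)) (b := (1:ℝ)) (f := fE i j) (μ := MeasureTheory.volume) ?_
      · rwa [uIcc_of_le zero_le_one] at this
      · rw [uIcc_of_le zero_le_one]
        exact ((hfcont i j).integrableOn_compact isCompact_Icc)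
    exact (((hWcont i 0).mul (hΨcont 0)).add ((hWcont i 1).mul (hΨcont 1))).add hint
  -- the derivative of N is zero on Ico
  have hNderiv : ∀ i j : Fin 2, ∀ r ∈ Ico (0:ℝ) 1,
      HasDerivWithinAt (N i j) 0 (Ici r) r := by
    intro i j r hr
    have hrIcc : r ∈ Icc (0:ℝ) 1 := ⟨hr.1, hr.2.le⟩
    have hIcoMem : Icc (0:ℝ) 1 ∈ nhdsWithin r (Ici r) :=
      Filter.mem_of_superset (Ico_mem_nhdsGE_of_mem ⟨le_refl r, hr.2⟩)
        (fun x hx => ⟨hr.1.trans hx.1, hx.2.le⟩)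
    have hpart : HasDerivWithinAt
        (fun u => (W u i 0 * Ψ u 0 j + W u i 1 * Ψ u 1 j) + ∫ s in (0:ℝ)..u, fE i j s)
        (((Wd r i 0 * Ψ r 0 j + W r i 0 * Ψd r 0 j)
          + (Wd r i 1 * Ψ r 1 j + W r i 1 * Ψd r 1 j)) + fE i j r) (Ici r) r := by
      refine HasDerivWithinAt.add ?_ (hFTC i j r hr)
      refine HasDerivWithinAt.add ?_ ?_
      · exact (((hWder r hrIcc i 0).mul (hΨder r hrIcc 0 j)).mono_of_mem_nhdsWithin hIcoMem)
      · exact (((hWder r hrIcc i 1).mul (hΨder r hrIcc 1 j)).mono_of_mem_nhdsWithin hIcoMem)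
    have hzero : ((Wd r i 0 * Ψ r 0 j + W r i 0 * Ψd r 0 j)
          + (Wd r i 1 * Ψ r 1 j + W r i 1 * Ψd r 1 j)) + fE i j r = 0 := by
      have hWdE : ∀ k : Fin 2, Wd r i k = -(γ' r * (W r i 0 * A (γ r) μ 0 k
          + W r i 1 * A (γ r) μ 1 k)) := by
        intro k
        have := congrFun (congrFun (hWdval r hrIcc) i) k
        simpa [Matrix.neg_apply, Matrix.smul_apply, smul_eq_mul, Matrix.mul_apply,
          Fin.sum_univ_two] using this
      have hΨdE : ∀ k : Fin 2, Ψd r k j = γ' r * ((A (γ r) μ k 0 * Ψ r 0 j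
          + A (γ r) μ k 1 * Ψ r 1 j) + (-(c (γ r))⁻¹) * (sigmaMinus * Pm r) k j) := by
        intro k
        simp [hΨddef, Matrix.smul_apply, Matrix.add_apply, Matrix.mul_apply,
          Fin.sum_univ_two, smul_eq_mul]
        ring
      rw [hWdE 0, hWdE 1, hΨdE 0, hΨdE 1, hfE_eq]
      have hA00 : A (γ r) μ 0 0 = 0 := by simp [hA]
      have hA01 : A (γ r) μ 0 1 = 1 := by simp [hA]
      have hA10 : A (γ r) μ 1 0 = -μ / c (γ r) := by simp [hA]
      have hA11 : A (γ r) μ 1 1 = 0 := by simp [hA]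
      have hS0 : (sigmaMinus * Pm r) 0 j = 0 := by
        simp [sigmaMinus, Matrix.mul_apply, Fin.sum_univ_two]
      have hS1 : (sigmaMinus * Pm r) 1 j = Pm r 0 j := by
        simp [sigmaMinus, Matrix.mul_apply, Fin.sum_univ_two]
      have hWS : (W r * sigmaMinus * Pm r) i j = W r i 1 * Pm r 0 j := by
        simp [sigmaMinus, Matrix.mul_apply, Fin.sum_univ_two]
      rw [hA00, hA01, hA10, hA11, hS0, hS1, hWS]
      field_simp
      ring
    rw [show (0:ℂ) = (((Wd r i 0 * Ψ r 0 j + W r i 0 * Ψd r 0 j)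
          + (Wd r i 1 * Ψ r 1 j + W r i 1 * Ψd r 1 j)) + fE i j r) from hzero.symm]
    exact hpart
  -- N vanishes at 0
  have hΨ0 : ∀ i j : Fin 2, Ψ 0 i j = 0 := by
    intro i j
    have hx₀V : ((x₀ : ℂ), μ) ∈ V := by
      have := hγV 0 ⟨le_refl 0, zero_le_one⟩
      rwa [hγ0] at this
    have hmem : ∀ᶠ z in nhds μ, ((x₀ : ℂ), z) ∈ V := by
      have hcz : Continuous fun z : ℂ => ((x₀:ℂ), z) := by fun_prop
      have := hcz.continuousAt (x := μ) |>.preimage_mem_nhds (hV.mem_nhds hx₀V)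
      exact this
    have heqv : (fun z => Φ (x₀, z) i j) =ᶠ[nhds μ]
        fun _ => (1 : Matrix (Fin 2) (Fin 2) ℂ) i j := by
      filter_upwards [hmem] with z hz
      rw [hnorm z hz]
    have : Ψ 0 i j = deriv (fun z => Φ (x₀, z) i j) μ := by
      rw [hΨdef]; simp only [Matrix.of_apply, hγ0]
    rw [this, heqv.deriv_eq, deriv_const]
  have hN0 : ∀ i j : Fin 2, N i j 0 = 0 := by
    intro i j
    rw [hNdef]
    simp [hΨ0, intervalIntegral.integral_same]
  have hN1 : ∀ i j : Fin 2, N i j 1 = 0 := by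
    intro i j
    have := constant_of_has_deriv_right_zero (hNcont i j)
      (fun r hr => hNderiv i j r hr) 1 ⟨zero_le_one, le_refl 1⟩
    rw [this, hN0]
  -- assemble
  set Iv : Matrix (Fin 2) (Fin 2) ℂ :=
    Matrix.of (fun i j => ∫ s in (0:ℝ)..1, fE i j s) with hIvdef
  have hmat : W 1 * Ψ 1 + Iv = 0 := by
    ext i j
    have h := hN1 i j
    rw [hNdef] at h
    simp only [Matrix.add_apply, Matrix.mul_apply, Fin.sum_univ_two, Matrix.zero_apply,
      hIvdef, Matrix.of_apply]
    simpa using h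
  have hΨ1 : Ψ 1 = -(Pm 1 * Iv) := by
    have h1 : W 1 * Ψ 1 = -Iv := eq_neg_of_add_eq_zero_left hmat
    calc Ψ 1 = (Pm 1 * W 1) * Ψ 1 := by rw [hPW 1 ⟨zero_le_one, le_refl 1⟩, one_mul]
      _ = Pm 1 * (W 1 * Ψ 1) := by rw [mul_assoc]
      _ = Pm 1 * (-Iv) := by rw [h1]
      _ = -(Pm 1 * Iv) := by rw [mul_neg]
  exact hΨ1
end
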